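/- Let p be a prime, let R be a group of operators for a finite group G such that every inner automorphism of G lies in the image of R in Aut G (Inn G ≤ Aut_R G), and let g ∈ G be a p-element. Then g ∈ L_∞(G, R) if and only if g^r = g for every element r ∈ R whose order is coprime to p. -/

import Mathlib

/-- The commutator `[x, r] = x⁻¹ · x^r` for an operator group acting via `φ : R →* Aut G`. -/
def opComm {R G : Type*} [Group R] [Group G] (φ : R →* MulAut G) (x : G) (r : R) : G :=
  x⁻¹ * φ r x

/-- `opL φ n = Lₙ(G, R)`: elements `x` with `[x, r₁, …, rₙ] = 1` for all `r₁, …, rₙ ∈ R`. -/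
def opL {R G : Type*} [Group R] [Group G] (φ : R →* MulAut G) (n : ℕ) : Set G :=
  {x | ∀ l : List R, l.length = n → l.foldl (opComm φ) x = 1}

section BaerAux

variable {Γ : Type*} [Group Γ] {p : ℕ}

lemma mem_ucs_succ_iff' {n : ℕ} {x : Γ} :
    x ∈ Subgroup.upperCentralSeries Γ (n + 1) ↔
      ∀ y : Γ, x⁻¹ * y * x * y⁻¹ ∈ Subgroup.upperCentralSeries Γ n := by
  constructor
  · intro h y
    have h2 := mem_upperCentralSeries_succ_iff.mp
      ((Subgroup.upperCentralSeries Γ (n + 1)).inv_mem h) y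
    rwa [commutatorElement_def, inv_inv] at h2
  · intro h
    have : x⁻¹ ∈ Subgroup.upperCentralSeries Γ (n + 1) := by
      refine mem_upperCentralSeries_succ_iff.mpr fun y => ?_
      rw [commutatorElement_def, inv_inv]; exact h y
    simpa using (Subgroup.upperCentralSeries Γ (n + 1)).inv_mem this

lemma isNilpotent_coe_ucs (n : ℕ) : Group.IsNilpotent ↥(Subgroup.upperCentralSeries Γ n) := by
  rw [nilpotent_iff_finite_ascending_central_series]
  refine ⟨n, fun i => (Subgroup.upperCentralSeries Γ i).comap (Subgroup.upperCentralSeries Γ n).subtype,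
    ⟨?_, ?_⟩, ?_⟩
  · ext x
    simp only [Subgroup.mem_comap, Subgroup.coe_subtype, upperCentralSeries_zero,
      Subgroup.mem_bot]
    exact ⟨fun h => Subtype.ext h, fun h => by rw [h]; rfl⟩
  · intro x i hx g
    simp only [Subgroup.mem_comap, Subgroup.coe_subtype] at hx ⊢
    have := mem_upperCentralSeries_succ_iff.mp hx (g : Γ)
    exact this
  · ext x
    simp only [Subgroup.mem_comap, Subgroup.coe_subtype, Subgroup.mem_top, iff_true]
    exact x.2

lemma exists_pTorsion_subgroup [Finite Γ] (hp : p.Prime) (H : Subgroup Γ) [H.Normal]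
    (hnil : Group.IsNilpotent ↥H) :
    ∃ P : Subgroup Γ, IsPGroup p ↥P ∧ P.Normal ∧ P ≤ H ∧
      ∀ z, z ∈ H → (∃ k : ℕ, orderOf z = p ^ k) → z ∈ P := by
  haveI : Fact p.Prime := ⟨hp⟩
  haveI : Finite (Sylow p ↥H) :=
    Finite.of_injective (fun P : Sylow p ↥H => (P : Subgroup ↥H))
      (fun P Q h => Sylow.ext h)
  obtain ⟨P₀⟩ := (inferInstance : Nonempty (Sylow p ↥H))
  have tf := (isNilpotent_of_finite_tfae (G := ↥H)).out 0 3
  haveI hnorm : (P₀ : Subgroup ↥H).Normal := tf.mp hnil p ⟨hp⟩ P₀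
  -- every p-element of H is in P₀
  have key : ∀ z : ↥H, (∃ k : ℕ, orderOf z = p ^ k) → z ∈ (P₀ : Subgroup ↥H) := by
    rintro z ⟨k, hk⟩
    have hz : IsPGroup p (Subgroup.zpowers z) :=
      IsPGroup.of_card (by rw [Nat.card_zpowers, hk])
    obtain ⟨Q, hQ⟩ := hz.exists_le_sylow
    obtain ⟨γ, hγ⟩ := MulAction.exists_smul_eq ↥H Q P₀
    have h2 : γ • P₀ = P₀ := Sylow.smul_eq_of_normal
    have hQP : Q = P₀ := MulAction.injective γ (hγ.trans h2.symm)
    exact hQP ▸ hQ (Subgroup.mem_zpowers z)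
  refine ⟨(P₀ : Subgroup ↥H).map H.subtype, P₀.2.map H.subtype, ?_, ?_, ?_⟩
  · constructor
    intro z hz γ
    obtain ⟨w, hw, rfl⟩ := Subgroup.mem_map.mp hz
    have hword : ∃ k : ℕ, orderOf (H.subtype w) = p ^ k := by
      obtain ⟨k, h1⟩ := P₀.2 ⟨w, hw⟩
      have : (⟨w, hw⟩ : ↥(P₀ : Subgroup ↥H)) ^ (p ^ k) = 1 := h1
      have hcoe : w ^ (p ^ k) = 1 := by
        simpa using congrArg (Subtype.val) this
      have : orderOf (H.subtype w) ∣ p ^ k := by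
        rw [orderOf_injective H.subtype H.subtype_injective w]
        exact orderOf_dvd_of_pow_eq_one hcoe
      obtain ⟨j, _, hj⟩ := (Nat.dvd_prime_pow hp).mp this
      exact ⟨j, hj⟩
    have hmemH : γ * (H.subtype w) * γ⁻¹ ∈ H := ‹H.Normal›.conj_mem _ w.2 γ
    have hord : orderOf (γ * (H.subtype w) * γ⁻¹) = orderOf (H.subtype w) := by
      have := orderOf_injective (MulAut.conj γ).toMonoidHom (MulAut.conj γ).injective
        (H.subtype w)
      simpa [MulAut.conj_apply] using this
    refine Subgroup.mem_map.mpr ⟨⟨_, hmemH⟩, key _ ?_, rfl⟩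
    obtain ⟨k, hk⟩ := hword
    refine ⟨k, ?_⟩
    rw [Subgroup.orderOf_mk, hord, hk]
  · intro z hz
    obtain ⟨w, _, rfl⟩ := Subgroup.mem_map.mp hz
    exact w.2
  · intro z hzH hzp
    refine Subgroup.mem_map.mpr ⟨⟨z, hzH⟩, key _ ?_, rfl⟩
    obtain ⟨k, hk⟩ := hzp
    exact ⟨k, by rw [Subgroup.orderOf_mk, hk]⟩

lemma exists_ne_one_mem_center {Q : Type*} [Group Q] [Finite Q] (hp : p.Prime)
    (P : Subgroup Q) [P.Normal] (hP : IsPGroup p ↥P) (hPne : P ≠ ⊥)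
    (N : Subgroup Q) (hNC : ∀ d ∈ N, ∀ z ∈ P, d * z = z * d)
    (hNidx : ∃ k : ℕ, N.index = p ^ k) :
    ∃ z, z ∈ P ∧ z ≠ 1 ∧ z ∈ Subgroup.center Q := by
  haveI : Fact p.Prime := ⟨hp⟩
  haveI : Finite (Sylow p Q) :=
    Finite.of_injective (fun S : Sylow p Q => (S : Subgroup Q)) (fun S T h => Sylow.ext h)
  obtain ⟨S⟩ := (inferInstance : Nonempty (Sylow p Q))
  -- action of S on P by conjugation
  letI : MulAction ↥(S : Subgroup Q) ↥P :=
    MulAction.compHom _ ((MulAut.conjNormal (H := P)).comp (S : Subgroup Q).subtype)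
  have hsmul : ∀ (s : ↥(S : Subgroup Q)) (z : ↥P),
      ((s • z : ↥P) : Q) = (s : Q) * z * (s : Q)⁻¹ := fun s z => rfl
  have hmod := IsPGroup.card_modEq_card_fixedPoints (G := ↥(S : Subgroup Q)) S.2 ↥P
  have hdvdP : p ∣ Nat.card ↥P := by
    obtain ⟨m, hm⟩ := hP.exists_card_eq
    rcases m with - | m'
    · exact absurd (Subgroup.card_eq_one.mp (by simpa using hm)) hPne
    · exact hm ▸ dvd_pow_self p (Nat.succ_ne_zero m')
  have hdvdF : p ∣ Nat.card (MulAction.fixedPoints ↥(S : Subgroup Q) ↥P) :=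
    (Nat.modEq_zero_iff_dvd).mp ((hmod.symm.trans (Nat.modEq_zero_iff_dvd.mpr hdvdP)))
  have h1fix : (1 : ↥P) ∈ MulAction.fixedPoints ↥(S : Subgroup Q) ↥P := by
    intro s
    apply Subtype.ext
    rw [hsmul]
    simp
  have hnontriv : Nontrivial (MulAction.fixedPoints ↥(S : Subgroup Q) ↥P) := by
    rw [← Finite.one_lt_card_iff_nontrivial]
    have hpos : 0 < Nat.card (MulAction.fixedPoints ↥(S : Subgroup Q) ↥P) :=
      Nat.card_pos_iff.mpr ⟨⟨⟨1, h1fix⟩⟩, inferInstance⟩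
    have h5 := Nat.le_of_dvd hpos hdvdF
    have hp2 := hp.two_le
    omega
  obtain ⟨z, hz⟩ := exists_ne (⟨⟨1, Subgroup.one_mem P⟩, h1fix⟩ :
    MulAction.fixedPoints ↥(S : Subgroup Q) ↥P)
  refine ⟨(z : ↥P), (z : ↥P).2, ?_, ?_⟩
  · intro h
    apply hz
    apply Subtype.ext
    apply Subtype.ext
    exact h
  · -- S ⊔ N = ⊤ and both centralize z
    have hSZ : (S : Subgroup Q) ≤ Subgroup.centralizer {((z : ↥P) : Q)} := by
      intro s hs
      rw [Subgroup.mem_centralizer_iff]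
      rintro h rfl'
      rcases rfl' with rfl
      have h3 := congrArg (Subtype.val) (z.2 ⟨s, hs⟩)
      rw [hsmul] at h3
      exact (mul_inv_eq_iff_eq_mul.mp h3).symm
    have hNZ : N ≤ Subgroup.centralizer {((z : ↥P) : Q)} := by
      intro d hd
      rw [Subgroup.mem_centralizer_iff]
      rintro h rfl'
      rcases rfl' with rfl
      exact (hNC d hd _ (z : ↥P).2).symm
    have hsup : (S : Subgroup Q) ⊔ N = ⊤ := by
      rw [← Subgroup.index_eq_one]
      have h1 : ((S : Subgroup Q) ⊔ N).index ∣ (S : Subgroup Q).index :=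
        Subgroup.index_dvd_of_le le_sup_left
      have h2 : ((S : Subgroup Q) ⊔ N).index ∣ N.index :=
        Subgroup.index_dvd_of_le le_sup_right
      obtain ⟨k, hk⟩ := hNidx
      obtain ⟨j, hjk, hj⟩ := (Nat.dvd_prime_pow hp).mp (hk ▸ h2)
      rcases j with - | j'
      · simpa using hj
      · exfalso
        exact S.not_dvd_index (dvd_trans (hj ▸ dvd_pow_self p (Nat.succ_ne_zero j')) h1)
    rw [Subgroup.mem_center_iff]
    intro q
    have hq : q ∈ Subgroup.centralizer {((z : ↥P) : Q)} := by
      have : q ∈ (S : Subgroup Q) ⊔ N := hsup ▸ Subgroup.mem_top q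
      exact (sup_le hSZ hNZ) this
    exact (Subgroup.mem_centralizer_iff.mp hq _ rfl).symm

lemma ucs_step [Finite Γ] (hp : p.Prime) (P D : Subgroup Γ) [P.Normal] [D.Normal]
    (hP : IsPGroup p ↥P)
    (hDC : ∀ d ∈ D, ∀ z ∈ P, d * z = z * d)
    (hD : ∀ γ : Γ, ∃ a : ℕ, γ ^ p ^ a ∈ D) (i : ℕ)
    (hne : ¬ P ≤ Subgroup.upperCentralSeries Γ i) :
    ∃ x, x ∈ P ∧ x ∈ Subgroup.upperCentralSeries Γ (i + 1) ∧ x ∉ Subgroup.upperCentralSeries Γ i := by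
  haveI : Fact p.Prime := ⟨hp⟩
  set W : Subgroup Γ := P ⊓ Subgroup.upperCentralSeries Γ i with hW
  haveI : W.Normal :=
    ⟨fun n hn g => ⟨‹P.Normal›.conj_mem _ hn.1 g,
      (inferInstance : (Subgroup.upperCentralSeries Γ i).Normal).conj_mem _ hn.2 g⟩⟩
  set π := QuotientGroup.mk' W with hπ
  set Pb : Subgroup (Γ ⧸ W) := P.map π with hPb
  set Nb : Subgroup (Γ ⧸ W) := D.map π with hNb
  haveI : Pb.Normal := Subgroup.Normal.map ‹P.Normal› π (QuotientGroup.mk'_surjective W)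
  haveI : Nb.Normal := Subgroup.Normal.map ‹D.Normal› π (QuotientGroup.mk'_surjective W)
  have hPbP : IsPGroup p ↥Pb := hP.map π
  have hPbne : Pb ≠ ⊥ := by
    obtain ⟨x₀, hx₀P, hx₀Z⟩ := SetLike.not_le_iff_exists.mp hne
    intro hbot
    have : π x₀ ∈ Pb := Subgroup.mem_map.mpr ⟨x₀, hx₀P, rfl⟩
    rw [hbot, Subgroup.mem_bot] at this
    have : x₀ ∈ W := (QuotientGroup.eq_one_iff x₀).mp this
    exact hx₀Z this.2
  have hNC' : ∀ d ∈ Nb, ∀ z ∈ Pb, d * z = z * d := by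
    rintro d hd z hz
    obtain ⟨d₀, hd₀, rfl⟩ := Subgroup.mem_map.mp hd
    obtain ⟨z₀, hz₀, rfl⟩ := Subgroup.mem_map.mp hz
    rw [← map_mul, ← map_mul, hDC d₀ hd₀ z₀ hz₀]
  have hNidx : ∃ k : ℕ, Nb.index = p ^ k := by
    have hpg : IsPGroup p ((Γ ⧸ W) ⧸ Nb) := by
      intro q
      obtain ⟨q', rfl⟩ := QuotientGroup.mk'_surjective Nb q
      obtain ⟨γ, rfl⟩ := QuotientGroup.mk'_surjective W q'
      obtain ⟨a, ha⟩ := hD γ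
      refine ⟨a, ?_⟩
      rw [← map_pow, ← map_pow]
      exact (QuotientGroup.eq_one_iff _).mpr
        (Subgroup.mem_map.mpr ⟨γ ^ p ^ a, ha, rfl⟩)
    obtain ⟨k, hk⟩ := hpg.exists_card_eq
    exact ⟨k, by rw [Subgroup.index, hk]⟩
  obtain ⟨z, hzPb, hzne, hzc⟩ := exists_ne_one_mem_center hp Pb hPbP hPbne Nb hNC' hNidx
  obtain ⟨x, hxP, rfl⟩ := Subgroup.mem_map.mp hzPb
  refine ⟨x, hxP, ?_, ?_⟩
  · rw [mem_upperCentralSeries_succ_iff]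
    intro y
    have : π (x * y * x⁻¹ * y⁻¹) = 1 := by
      have := Subgroup.mem_center_iff.mp hzc (π y)
      simp only [map_mul, map_inv]
      rw [← this]
      group
    have hmem : x * y * x⁻¹ * y⁻¹ ∈ W := (QuotientGroup.eq_one_iff _).mp this
    exact hmem.2
  · intro hx
    exact hzne ((QuotientGroup.eq_one_iff x).mpr ⟨hxP, hx⟩)

-- P eventually inside the upper central series
lemma le_ucs_of_step [Finite Γ] (hp : p.Prime) (P D : Subgroup Γ) [P.Normal] [D.Normal]
    (hP : IsPGroup p ↥P)
    (hDC : ∀ d ∈ D, ∀ z ∈ P, d * z = z * d)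
    (hD : ∀ γ : Γ, ∃ a : ℕ, γ ^ p ^ a ∈ D) :
    ∃ n : ℕ, P ≤ Subgroup.upperCentralSeries Γ n := by
  by_contra hcon
  push_neg at hcon
  have hstrict : StrictMono (fun i => Nat.card ↥(P ⊓ Subgroup.upperCentralSeries Γ i)) := by
    apply strictMono_nat_of_lt_succ
    intro i
    obtain ⟨x, hxP, hx1, hx0⟩ := ucs_step hp P D hP hDC hD i (hcon i)
    have hle : P ⊓ Subgroup.upperCentralSeries Γ i ≤ P ⊓ Subgroup.upperCentralSeries Γ (i + 1) :=
      inf_le_inf_left P (upperCentralSeries_mono Γ (Nat.le_succ i))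
    have hlt : P ⊓ Subgroup.upperCentralSeries Γ i < P ⊓ Subgroup.upperCentralSeries Γ (i + 1) :=
      lt_of_le_of_ne hle (fun h => hx0 (h ▸ (⟨hxP, hx1⟩ :
        x ∈ P ⊓ Subgroup.upperCentralSeries Γ (i + 1)) : x ∈ P ⊓ Subgroup.upperCentralSeries Γ i).2)
    have hsub : ((P ⊓ Subgroup.upperCentralSeries Γ i : Subgroup Γ) : Set Γ) ⊂
        ((P ⊓ Subgroup.upperCentralSeries Γ (i + 1) : Subgroup Γ) : Set Γ) := by
      rw [Set.ssubset_iff_of_subset (SetLike.coe_subset_coe.mpr hle)]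
      obtain ⟨y, hy1, hy0⟩ := SetLike.exists_of_lt hlt
      exact ⟨y, hy1, hy0⟩
    have := Set.Finite.card_lt_card (Set.toFinite _) hsub
    exact this
  have h1 : ∀ i : ℕ, i ≤ Nat.card ↥(P ⊓ Subgroup.upperCentralSeries Γ i) := fun i => hstrict.le_apply
  have h2 := h1 (Nat.card Γ + 1)
  have h3 : Nat.card ↥(P ⊓ Subgroup.upperCentralSeries Γ (Nat.card Γ + 1)) ≤ Nat.card Γ :=
    Subgroup.card_le_card_group _
  omega

lemma baer_backward [Finite Γ] (hp : p.Prime) (x : Γ) (hx : ∃ k : ℕ, orderOf x = p ^ k)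
    (hcomm : ∀ y : Γ, Nat.Coprime (orderOf y) p → y * x = x * y) :
    ∃ n : ℕ, x ∈ Subgroup.upperCentralSeries Γ n := by
  haveI : Fact p.Prime := ⟨hp⟩
  set S : Set Γ := {y : Γ | Nat.Coprime (orderOf y) p} with hS
  have hSconj : ∀ γ : Γ, ∀ y ∈ S, γ * y * γ⁻¹ ∈ S := by
    intro γ y hy
    have : orderOf (γ * y * γ⁻¹) = orderOf y := by
      have := orderOf_injective (MulAut.conj γ).toMonoidHom (MulAut.conj γ).injective y
      simpa [MulAut.conj_apply] using this
    simpa [hS, Set.mem_setOf_eq, this] using hy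
  set D : Subgroup Γ := Subgroup.closure S with hD
  haveI hDnormal : D.Normal := by
    constructor
    intro n hn γ
    have himg : D.map (MulAut.conj γ).toMonoidHom ≤ D := by
      rw [hD, MonoidHom.map_closure]
      apply Subgroup.closure_le _ |>.mpr
      rintro z ⟨y, hy, rfl⟩
      exact Subgroup.subset_closure (by simpa [MulAut.conj_apply] using hSconj γ y hy)
    have : (MulAut.conj γ).toMonoidHom n ∈ D.map (MulAut.conj γ).toMonoidHom :=
      Subgroup.mem_map.mpr ⟨n, hn, rfl⟩
    simpa [MulAut.conj_apply] using himg this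
  have hDel : ∀ γ : Γ, ∃ a : ℕ, γ ^ p ^ a ∈ D := by
    intro γ
    refine ⟨(orderOf γ).factorization p, ?_⟩
    apply Subgroup.subset_closure
    have h0 : orderOf γ ≠ 0 := (orderOf_pos γ).ne'
    have hgcd : Nat.gcd (orderOf γ) (p ^ (orderOf γ).factorization p) =
        p ^ (orderOf γ).factorization p :=
      Nat.gcd_eq_right (Nat.ordProj_dvd _ _)
    have : orderOf (γ ^ p ^ (orderOf γ).factorization p) = ordCompl[p] (orderOf γ) := by
      rw [orderOf_pow, hgcd]
    simp only [hS, Set.mem_setOf_eq, this]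
    exact (Nat.coprime_ordCompl hp h0).symm
  set C : Subgroup Γ := Subgroup.centralizer (D : Set Γ) with hC
  haveI hCnormal : C.Normal := by
    constructor
    intro c hc γ
    rw [hC, Subgroup.mem_centralizer_iff]
    intro d hd
    have hd' : γ⁻¹ * d * γ ∈ D := by
      have := hDnormal.conj_mem d hd γ⁻¹
      simpa using this
    have hcd := Subgroup.mem_centralizer_iff.mp hc _ hd'
    -- (γ⁻¹ d γ) c = c (γ⁻¹ d γ)  ⟹  d (γ c γ⁻¹) = (γ c γ⁻¹) d
    have := congrArg (fun w => γ * w * γ⁻¹) hcd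
    simpa [mul_assoc] using this
  have hxC : x ∈ C := by
    rw [hC, Subgroup.mem_centralizer_iff]
    intro d hd
    induction hd using Subgroup.closure_induction with
    | mem y hy => exact hcomm y hy
    | one => simp
    | mul a b _ _ ha hb => rw [mul_assoc, hb, ← mul_assoc, ha, mul_assoc]
    | inv a _ ha =>
        have := congrArg (fun w => a⁻¹ * w * a⁻¹) ha
        simpa [mul_assoc] using this.symm
  -- C is nilpotent
  have hCnil : Group.IsNilpotent ↥C := by
    apply of_quotient_center_nilpotent
    have hpg : IsPGroup p (↥C ⧸ Subgroup.center ↥C) := by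
      intro cb
      obtain ⟨c, rfl⟩ := QuotientGroup.mk_surjective cb
      obtain ⟨a, ha⟩ := hDel (c : Γ)
      refine ⟨a, ?_⟩
      have hcent : c ^ p ^ a ∈ Subgroup.center ↥C := by
        rw [Subgroup.mem_center_iff]
        intro b
        apply Subtype.ext
        push_cast
        have hb := Subgroup.mem_centralizer_iff.mp b.2 _ ha
        simpa using hb.symm
      exact (QuotientGroup.eq_one_iff _).mpr hcent
    exact hpg.isNilpotent
  obtain ⟨P, hPp, hPnormal, hPC, hPmem⟩ := exists_pTorsion_subgroup hp C hCnil
  haveI := hPnormal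
  have hxP : x ∈ P := hPmem x hxC hx
  have hDC : ∀ d ∈ D, ∀ z ∈ P, d * z = z * d := by
    intro d hd z hz
    exact Subgroup.mem_centralizer_iff.mp (hPC hz) d hd
  obtain ⟨n, hn⟩ := le_ucs_of_step hp P D hPp hDC hDel
  exact ⟨n, hn hxP⟩

lemma baer_forward [Finite Γ] (hp : p.Prime) {n : ℕ} (x : Γ)
    (hx : x ∈ Subgroup.upperCentralSeries Γ n) (hxp : ∃ k : ℕ, orderOf x = p ^ k)
    (y : Γ) (hy : Nat.Coprime (orderOf y) p) : y * x * y⁻¹ = x := by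
  obtain ⟨P, hPp, hPnormal, hPH, hPmem⟩ :=
    exists_pTorsion_subgroup hp (Subgroup.upperCentralSeries Γ n) (isNilpotent_coe_ucs n)
  have hxP : x ∈ P := hPmem x hx hxp
  set f : Γ → Γ := fun a => a⁻¹ * (y * a * y⁻¹) with hf
  set T : ℕ → Set Γ := fun i => (Set.image f)^[i] (P : Set Γ) with hT
  have hTsucc : ∀ i, T (i + 1) = f '' T i := by
    intro i
    simp only [hT, Function.iterate_succ_apply']
  have hTP : ∀ i, T i ⊆ (P : Set Γ) := by
    intro i
    induction i with
    | zero => simp [hT]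
    | succ i ih =>
        rw [hTsucc]
        rintro - ⟨a, ha, rfl⟩
        have haP : a ∈ P := ih ha
        exact mul_mem (inv_mem haP) (hPnormal.conj_mem a haP y)
  have hTZ : ∀ i, T i ⊆ (Subgroup.upperCentralSeries Γ (n - i) : Set Γ) := by
    intro i
    induction i with
    | zero => simpa [hT] using hPH
    | succ i ih =>
        rw [hTsucc]
        rintro - ⟨a, ha, rfl⟩
        have haZ : a ∈ Subgroup.upperCentralSeries Γ (n - i) := ih ha
        rcases h : n - i with - | m
        · rw [h, upperCentralSeries_zero, Subgroup.mem_bot] at haZ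
          simp [hf, haZ, one_mem]
        · rw [h] at haZ
          have hmm : n - (i + 1) = m := by omega
          rw [hmm]
          have := mem_ucs_succ_iff'.mp haZ y
          simpa [hf, mul_assoc] using this
  have main : ∀ i, ∀ a ∈ T (n - i), y * a * y⁻¹ = a := by
    intro i
    induction i with
    | zero =>
        intro a ha
        have := hTZ n (by simpa using ha)
        rw [Nat.sub_self, upperCentralSeries_zero] at this
        have ha1 : a = 1 := by simpa using this
        simp [ha1]
    | succ i ih =>
        intro a ha
        by_cases hni : n ≤ i
        · exact ih a (by rwa [(by omega : n - i = n - (i + 1))])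
        · have hrw : n - i = (n - (i + 1)) + 1 := by omega
          have hcT : f a ∈ T (n - i) := by
            rw [hrw, hTsucc]
            exact ⟨a, ha, rfl⟩
          have hcfix : y * f a * y⁻¹ = f a := ih _ hcT
          have hac : y * a * y⁻¹ = a * f a := by
            simp [hf, mul_assoc]
          have hcpow : ∀ j : ℕ, y * (f a) ^ j * y⁻¹ = (f a) ^ j := by
            intro j
            induction j with
            | zero => simp
            | succ j ihj =>
                rw [pow_succ]
                calc y * ((f a) ^ j * f a) * y⁻¹
                    = (y * (f a) ^ j * y⁻¹) * (y * f a * y⁻¹) := by group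
                  _ = (f a) ^ j * f a := by rw [ihj, hcfix]
          have hconj : ∀ j : ℕ, y ^ j * a * (y ^ j)⁻¹ = a * (f a) ^ j := by
            intro j
            induction j with
            | zero => simp
            | succ j ihj =>
                have : y ^ (j + 1) * a * (y ^ (j + 1))⁻¹
                    = y * (y ^ j * a * (y ^ j)⁻¹) * y⁻¹ := by group
                rw [this, ihj]
                calc y * (a * (f a) ^ j) * y⁻¹
                    = (y * a * y⁻¹) * (y * (f a) ^ j * y⁻¹) := by group
                  _ = (a * f a) * (f a) ^ j := by rw [hac, hcpow]
                  _ = a * (f a) ^ (j + 1) := by rw [pow_succ]; group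
          have hq := hconj (orderOf y)
          rw [pow_orderOf_eq_one y] at hq
          simp only [one_mul, inv_one, mul_one] at hq
          have hfq : (f a) ^ (orderOf y) = 1 := (left_eq_mul.mp hq).symm ▸ rfl
          have hdvd1 : orderOf (f a) ∣ orderOf y := orderOf_dvd_of_pow_eq_one hfq
          have hfaP : f a ∈ P := hTP _ hcT
          obtain ⟨k, hk⟩ := hPp ⟨f a, hfaP⟩
          have hdvd2 : orderOf (f a) ∣ p ^ k := by
            apply orderOf_dvd_of_pow_eq_one
            simpa using congrArg Subtype.val hk
          have hcop : Nat.Coprime (orderOf y) (p ^ k) := hy.pow_right k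
          have : orderOf (f a) = 1 :=
            Nat.eq_one_of_dvd_coprimes hcop hdvd1 hdvd2
          have hfa1 : f a = 1 := orderOf_eq_one_iff.mp this
          rw [hac, hfa1, mul_one]
  have := main n x (by rw [Nat.sub_self]; simpa [hT] using hxP)
  exact this

end BaerAux

section StepA

variable {R G : Type*} [Group R] [Group G] (φ : R →* MulAut G)

/-- The semidirect product of `G` with the image of `φ`. -/
abbrev OpGamma : Type _ := G ⋊[(φ.range).subtype] ↥(φ.range)

instance [Finite G] [Finite R] : Finite (OpGamma φ) := by
  apply Finite.of_injective (fun x : OpGamma φ => (x.left, x.right))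
  intro a b h
  simp only [Prod.mk.injEq] at h
  exact SemidirectProduct.ext h.1 h.2

open SemidirectProduct

/-- The natural map to `MulAut G`. -/
def opChi : OpGamma φ →* MulAut G :=
  SemidirectProduct.lift (MulAut.conj) ((φ.range).subtype) (by
    intro a
    ext z w
    simp [MulAut.conj_apply, mul_assoc])

lemma opChi_mem_range (w : OpGamma φ) (hInn : ∀ g : G, MulAut.conj g ∈ φ.range) :
    opChi φ w ∈ φ.range := by
  rw [← inl_left_mul_inr_right w, map_mul]
  apply mul_mem
  · simp only [opChi, lift_inl]
    exact hInn w.left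
  · simp only [opChi, lift_inr]
    exact w.right.2

lemma opChi_conj (w : OpGamma φ) (x : G) :
    w * inl x * w⁻¹ = inl (opChi φ w x) := by
  obtain ⟨l, a⟩ := w
  rw [mk_eq_inl_mul_inr]
  have h1 : (inr a : OpGamma φ) * inl x * (inr a)⁻¹ = inl ((φ.range).subtype a x) := by
    rw [← map_inv]
    exact (SemidirectProduct.inl_aut (φ := (φ.range).subtype) a x).symm
  have h2 : opChi φ (inl l * inr a) = MulAut.conj l * (φ.range).subtype a := by
    rw [map_mul]
    simp [opChi]
  rw [h2]
  calc (inl l * inr a) * inl x * ((inl l * inr a))⁻¹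
      = inl l * ((inr a) * inl x * (inr a)⁻¹) * (inl l)⁻¹ := by group
    _ = inl l * inl ((φ.range).subtype a x) * (inl l)⁻¹ := by rw [h1]
    _ = inl (l * (φ.range).subtype a x * l⁻¹) := by rw [← map_inv, ← map_mul, ← map_mul]
    _ = inl ((MulAut.conj l * (φ.range).subtype a) x) := by simp [MulAut.conj_apply]

lemma opL_iff_ucs (hInn : ∀ g : G, MulAut.conj g ∈ φ.range) :
    ∀ (n : ℕ) (x : G), x ∈ opL φ n ↔ inl x ∈ Subgroup.upperCentralSeries (OpGamma φ) n := by
  intro n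
  induction n with
  | zero =>
      intro x
      simp only [opL, Set.mem_setOf_eq, upperCentralSeries_zero, Subgroup.mem_bot]
      constructor
      · intro h
        have := h [] rfl
        simp only [List.foldl_nil] at this
        rw [this, map_one]
      · intro h l hl
        rw [List.length_eq_zero_iff] at hl
        subst hl
        simpa using inl_injective (by simpa using h)
  | succ n ih =>
      intro x
      have hstep : x ∈ opL φ (n + 1) ↔ ∀ r : R, opComm φ x r ∈ opL φ n := by
        constructor
        · intro h r l hl
          exact h (r :: l) (by simp [hl])
        · intro h l hl
          rcases l with - | ⟨r, l'⟩
          · simp at hl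
          · simp only [List.length_cons, Nat.succ_inj] at hl
            exact h r l' hl
      rw [hstep, mem_ucs_succ_iff']
      constructor
      · intro h w
        have hc : opChi φ w ∈ φ.range := opChi_mem_range φ w hInn
        obtain ⟨r, hr⟩ := hc
        have hcomm : (inl x)⁻¹ * w * inl x * w⁻¹ = inl (opComm φ x r) := by
          have := opChi_conj φ w x
          calc (inl x)⁻¹ * w * inl x * w⁻¹
              = (inl x)⁻¹ * (w * inl x * w⁻¹) := by group
            _ = (inl x)⁻¹ * inl (opChi φ w x) := by rw [this]
            _ = inl (x⁻¹ * opChi φ w x) := by rw [← map_inv, ← map_mul]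
            _ = inl (opComm φ x r) := by rw [opComm, hr]
        rw [hcomm]
        exact (ih _).mp (h r)
      · intro h r
        apply (ih _).mpr
        set w : OpGamma φ := inr ⟨φ r, ⟨r, rfl⟩⟩ with hw
        have hcomm : (inl x)⁻¹ * w * inl x * w⁻¹ = inl (opComm φ x r) := by
          have h1 : w * inl x * w⁻¹ = inl (φ r x) := by
            rw [hw, ← map_inv]
            exact (SemidirectProduct.inl_aut (φ := (φ.range).subtype) ⟨φ r, ⟨r, rfl⟩⟩ x).symm
          calc (inl x)⁻¹ * w * inl x * w⁻¹
              = (inl x)⁻¹ * (w * inl x * w⁻¹) := by group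
            _ = (inl x)⁻¹ * inl (φ r x) := by rw [h1]
            _ = inl (opComm φ x r) := by rw [opComm, ← map_inv, ← map_mul]
        rw [← hcomm]
        exact h w

end StepA


/-- Let `R` be a group of operators for a finite group `G` (acting via `φ : R →* Aut G`) such
that every inner automorphism of `G` lies in `φ(R)`, and let `g` be a `p`-element of `G`.
Then `g` lies in the absolute `R`-hypercenter `L_∞(G, R) = ⋃ₙ Lₙ(G, R)` iff `g^r = g` for
every `r ∈ R` of order coprime to `p`. -/
theorem mem_opHypercenter_iff (p : ℕ) (hp : p.Prime) (R G : Type*) [Group R] [Group G]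
    [Finite R] [Finite G] (φ : R →* MulAut G)
    (hInn : ∀ g : G, MulAut.conj g ∈ φ.range)
    (g : G) (hg : ∃ k : ℕ, orderOf g = p ^ k) :
    (∃ n : ℕ, g ∈ opL φ n) ↔ ∀ r : R, Nat.Coprime (orderOf r) p → φ r g = g := by
  have hordg : ∃ k : ℕ, orderOf (SemidirectProduct.inl (φ := (φ.range).subtype) g) = p ^ k := by
    obtain ⟨k, hk⟩ := hg
    exact ⟨k, by rw [orderOf_injective _ SemidirectProduct.inl_injective, hk]⟩
  constructor
  · rintro ⟨n, hn⟩ r hr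
    have hZ : SemidirectProduct.inl g ∈ Subgroup.upperCentralSeries (OpGamma φ) n :=
      (opL_iff_ucs φ hInn n g).mp hn
    set a : ↥φ.range := ⟨φ r, ⟨r, rfl⟩⟩ with ha
    have horda : Nat.Coprime (orderOf (SemidirectProduct.inr (φ := (φ.range).subtype) a)) p := by
      have h1 : orderOf (SemidirectProduct.inr (φ := (φ.range).subtype) a) = orderOf a :=
        orderOf_injective _ SemidirectProduct.inr_injective a
      have h2 : orderOf a = orderOf (φ r) := Subgroup.orderOf_mk _ _
      have h3 : orderOf (φ r) ∣ orderOf r := orderOf_map_dvd φ r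
      rw [h1, h2]
      exact Nat.Coprime.coprime_dvd_left h3 hr
    have hbf := baer_forward hp _ hZ hordg _ horda
    have hconj : SemidirectProduct.inr (φ := (φ.range).subtype) a *
        SemidirectProduct.inl g * (SemidirectProduct.inr a)⁻¹
        = SemidirectProduct.inl (φ r g) := by
      rw [← map_inv]
      exact (SemidirectProduct.inl_aut (φ := (φ.range).subtype) a g).symm
    rw [hconj] at hbf
    exact SemidirectProduct.inl_injective hbf
  · intro hfix
    have hcomm : ∀ w : OpGamma φ, Nat.Coprime (orderOf w) p →
        w * SemidirectProduct.inl g = SemidirectProduct.inl g * w := by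
      intro w hw
      obtain ⟨r₀, hr₀⟩ := opChi_mem_range φ w hInn
      set c := opChi φ w with hcdef
      have hcord : Nat.Coprime (orderOf c) p :=
        Nat.Coprime.coprime_dvd_left (orderOf_map_dvd (opChi φ) w) hw
      set s : ℕ := (orderOf r₀).factorization p with hs
      have hr : Nat.Coprime (orderOf (r₀ ^ p ^ s)) p := by
        have h0 : orderOf r₀ ≠ 0 := (orderOf_pos r₀).ne'
        have hgcd : Nat.gcd (orderOf r₀) (p ^ s) = p ^ s :=
          Nat.gcd_eq_right (Nat.ordProj_dvd _ _)
        rw [orderOf_pow, hgcd]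
        exact (Nat.coprime_ordCompl hp h0).symm
      have hpowc : φ (r₀ ^ p ^ s) = c ^ p ^ s := by rw [map_pow, hr₀]
      have hcpow : (c ^ p ^ s) g = g := by
        rw [← hpowc]
        exact hfix _ hr
      obtain ⟨m, hm⟩ := exists_pow_eq_self_of_coprime (x := c)
        (hcord.symm.pow_left s)
      have hiter : ∀ j : ℕ, ((c ^ p ^ s) ^ j) g = g := by
        intro j
        induction j with
        | zero => simp
        | succ j ihj => rw [pow_succ, MulAut.mul_apply, hcpow, ihj]
      have hcg : c g = g := by
        rw [← hm]
        exact hiter m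
      have hconj : w * SemidirectProduct.inl g * w⁻¹ = SemidirectProduct.inl g := by
        rw [opChi_conj φ w g, ← hcdef, hcg]
      exact mul_inv_eq_iff_eq_mul.mp hconj
    obtain ⟨n, hn⟩ := baer_backward hp _ hordg hcomm
    exact ⟨n, (opL_iff_ucs φ hInn n g).mpr hn⟩
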